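/- Let $0 < t_0 < t_1 < \cdots < t_N \le 1$ with $t_{i+1} \leq 4 t_i$ for all $i$, and suppose there is $\eta > 0$ with $h_i := t_{i+1} - t_i \leq \eta \sqrt{t_{i+1}}$ for all $i = 0, \dots, N-1$ and $t_0 \geq 2^{-8}\eta^2$. Then for every $i \in \{0, 1, \dots, N-1\}$, $\sum_{j=i}^{N-1} \frac{h_j}{t_j} \leq 128 + \log \frac{1}{t_i}$. -/

import Mathlib

lemma tele_aux (g : ℕ → ℝ) (i : ℕ) : ∀ N, i ≤ N →
    ∑ j ∈ Finset.Ico i N, (g (j + 1) - g j) = g N - g i := by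
  intro N hN
  induction N, hN using Nat.le_induction with
  | base => simp
  | succ n hn ih =>
    rw [Finset.sum_Ico_succ_top hn, ih]
    ring

theorem stmt7 (N : ℕ) (t : ℕ → ℝ) (η : ℝ) (hη : 0 < η)
    (ht0 : 0 < t 0) (hmono : ∀ i < N, t i < t (i + 1)) (htN : t N ≤ 1)
    (hquad : ∀ i < N, t (i + 1) ≤ 4 * t i)
    (hstep : ∀ i < N, t (i + 1) - t i ≤ η * Real.sqrt (t (i + 1)))
    (ht0η : (2 : ℝ) ^ (-8 : ℤ) * η ^ 2 ≤ t 0) :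
    ∀ i < N, ∑ j ∈ Finset.Ico i N, (t (j + 1) - t j) / t j ≤ 128 + Real.log (1 / t i) := by
  have hle : ∀ j k, j ≤ k → k ≤ N → t j ≤ t k := by
    intro j k hjk
    induction hjk with
    | refl => intro _; exact le_refl _
    | @step m h ih =>
      intro hN
      exact le_trans (ih (by omega)) (le_of_lt (hmono m (by omega)))
  have hpos : ∀ j, j ≤ N → 0 < t j := fun j hj =>
    lt_of_lt_of_le ht0 (hle 0 j (Nat.zero_le _) hj)
  intro i hiN
  -- per-term bound
  have key : ∀ j, i ≤ j → j < N →
      (t (j + 1) - t j) / t j ≤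
        (Real.log (t (j + 1)) - Real.log (t j)) +
          ((-(3 * η) / Real.sqrt (t (j + 1))) - (-(3 * η) / Real.sqrt (t j))) := by
    intro j _ hj
    set a := t j with ha'
    set b := t (j + 1) with hb'
    have ha : 0 < a := hpos j (by omega)
    have hb : 0 < b := hpos (j + 1) (by omega)
    have hab : a < b := hmono j hj
    have hb4 : b ≤ 4 * a := hquad j hj
    have hs : b - a ≤ η * Real.sqrt b := hstep j hj
    set sa := Real.sqrt a with hsa'
    set sb := Real.sqrt b with hsb'
    have hsa : 0 < sa := Real.sqrt_pos.mpr ha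
    have hsb : 0 < sb := Real.sqrt_pos.mpr hb
    have ha2 : sa ^ 2 = a := Real.sq_sqrt ha.le
    have hb2 : sb ^ 2 = b := Real.sq_sqrt hb.le
    have hsab : sa ≤ sb := Real.sqrt_le_sqrt hab.le
    have hsb2 : sb ≤ 2 * sa := by
      have : Real.sqrt b ≤ Real.sqrt (4 * a) := Real.sqrt_le_sqrt hb4
      rwa [show (4 : ℝ) * a = 2 ^ 2 * a by ring, Real.sqrt_mul (by positivity),
        Real.sqrt_sq (by norm_num)] at this
    -- log part
    have hlog : (b - a) / b ≤ Real.log b - Real.log a := by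
      have h1 := Real.log_le_sub_one_of_pos (show 0 < a / b by positivity)
      rw [Real.log_div ha.ne' hb.ne'] at h1
      have : (b - a) / b = 1 - a / b := by field_simp
      rw [this]; linarith
    -- quadratic part
    have hquadpart : (b - a) ^ 2 / (a * b) ≤ 3 * η * (1 / sa - 1 / sb) := by
      rw [div_le_iff₀ (by positivity)]
      have hrhs : 3 * η * (1 / sa - 1 / sb) * (a * b) = 3 * η * sa * sb * (sb - sa) := by
        rw [← ha2, ← hb2]; field_simp
      rw [hrhs]
      nlinarith [sub_nonneg.mpr hsab, mul_pos hsa hsb, sq_nonneg (sb - sa),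
        mul_nonneg (mul_nonneg hη.le hsb.le) (sub_nonneg.mpr hsab),
        mul_nonneg (sub_nonneg.mpr hsab) hsa.le]
    have hsplit : (b - a) / a = (b - a) / b + (b - a) ^ 2 / (a * b) := by
      field_simp; ring
    have : (-(3 * η) / sb) - (-(3 * η) / sa) = 3 * η * (1 / sa - 1 / sb) := by
      field_simp; ring
    rw [hsplit, this]
    linarith
  calc ∑ j ∈ Finset.Ico i N, (t (j + 1) - t j) / t j
      ≤ ∑ j ∈ Finset.Ico i N,
          ((Real.log (t (j + 1)) - Real.log (t j)) +
            ((-(3 * η) / Real.sqrt (t (j + 1))) - (-(3 * η) / Real.sqrt (t j)))) := by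
        apply Finset.sum_le_sum
        intro j hj
        rw [Finset.mem_Ico] at hj
        exact key j hj.1 hj.2
    _ = (Real.log (t N) - Real.log (t i)) +
          ((-(3 * η) / Real.sqrt (t N)) - (-(3 * η) / Real.sqrt (t i))) := by
        rw [Finset.sum_add_distrib,
          tele_aux (fun j => Real.log (t j)) i N hiN.le,
          tele_aux (fun j => -(3 * η) / Real.sqrt (t j)) i N hiN.le]
    _ ≤ 128 + Real.log (1 / t i) := by
        have hti : 0 < t i := hpos i hiN.le
        have htiN : 0 < t N := hpos N le_rfl
        have hlogN : Real.log (t N) ≤ 0 := Real.log_nonpos htiN.le htN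
        have hlog1 : Real.log (1 / t i) = -Real.log (t i) := by
          rw [one_div, Real.log_inv]
        have hsi : 2 ^ (-4 : ℤ) * η ≤ Real.sqrt (t i) := by
          rw [show Real.sqrt (t i) = Real.sqrt (t i) from rfl]
          have h2 : ((2 : ℝ) ^ (-4 : ℤ) * η) ^ 2 ≤ t i := by
            have : ((2 : ℝ) ^ (-4 : ℤ) * η) ^ 2 = 2 ^ (-8 : ℤ) * η ^ 2 := by
              rw [mul_pow, ← zpow_natCast, ← zpow_mul]; norm_num
            rw [this]
            exact le_trans ht0η (hle 0 i (Nat.zero_le _) hiN.le)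
          exact (Real.le_sqrt (by positivity) (by positivity)).mpr h2
        have hsipos : 0 < Real.sqrt (t i) := Real.sqrt_pos.mpr hti
        have hsNpos : 0 < Real.sqrt (t N) := Real.sqrt_pos.mpr htiN
        have h3 : 3 * η / Real.sqrt (t i) ≤ 48 := by
          have hc : (0 : ℝ) < 2 ^ (-4 : ℤ) * η := by positivity
          have := div_le_div_of_nonneg_left (show (0:ℝ) ≤ 3 * η by positivity) hc hsi
          calc 3 * η / Real.sqrt (t i) ≤ 3 * η / (2 ^ (-4 : ℤ) * η) := this
            _ = 48 := by field_simp; ring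
        have h4 : 0 ≤ 3 * η / Real.sqrt (t N) := by positivity
        have hrw : (-(3 * η) / Real.sqrt (t N)) - (-(3 * η) / Real.sqrt (t i))
            = 3 * η / Real.sqrt (t i) - 3 * η / Real.sqrt (t N) := by ring
        rw [hrw, hlog1]
        linarith
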